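/- Let m_1 > m_2 > 0, Ω_1, Ω_2 > 0, m_0 > 0, Ω_0 > 0, and let N ≥ 1. Let X_0, X_{1,1}, …, X_{1,N}, X_{2,1}, …, X_{2,N} be mutually independent random variables, where X_0 is Nakagami with shape m_0 and scale Ω_0, each X_{1,n} is Nakagami with shape m_1 and scale Ω_1, and each X_{2,n} is Nakagami with shape m_2 and scale Ω_2; set H = Σ_{n=1}^N X_{1,n} X_{2,n}, C = 2 (Γ(2m_2)/Γ(m_2)) (Γ(m_1 − m_2)/Γ(m_1)) (Ω_1 Ω_2)^{m_2}, and t = m_0 + N m_2. Then for every ρ > 0 and every threshold γ_th > 0, the outage probability with direct link satisfies P(ρ (X_0 + H)² ≤ γ_th) ≤ 2 (Γ(2m_0)/Γ(m_0)) Ω_0^{m_0} · C^N · (γ_th/ρ)^{t} / Γ(2t + 1). (Upper bound on the outage probability of an IRS-assisted system with a direct link; equation (28) of the paper.) -/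

import Mathlib

open MeasureTheory ProbabilityTheory Real

/-- The density of a Nakagami-`m` random variable with shape `m` and scale `Ω`:
`f_{m,Ω}(x) = (2 Ω^m / Γ(m)) x^(2m-1) exp(-Ω x²)` for `x > 0`, and `0` otherwise. -/
noncomputable def nakagamiPDF (m Ω x : ℝ) : ℝ :=
  if 0 < x then 2 * Ω ^ m / Real.Gamma m * x ^ (2 * m - 1) * Real.exp (-Ω * x ^ 2) else 0

/-- `X` is a Nakagami-`m` random variable (shape `m`, scale `Ω`) on `(E, P)`:
its law has density `nakagamiPDF m Ω` with respect to Lebesgue measure. -/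
def IsNakagami {E : Type*} [MeasurableSpace E] (P : MeasureTheory.Measure E)
    (X : E → ℝ) (m Ω : ℝ) : Prop :=
  MeasureTheory.Measure.map X P =
    MeasureTheory.volume.withDensity (fun x => ENNReal.ofReal (nakagamiPDF m Ω x))


open Set in
lemma real_beta {p q : ℝ} (hp : 0 < p) (hq : 0 < q) :
    ∫ s in (0:ℝ)..1, s ^ (q - 1) * (1 - s) ^ p
      = Real.Gamma q * Real.Gamma (p + 1) / Real.Gamma (p + q + 1) := by
  have h := Complex.Gamma_mul_Gamma_eq_betaIntegral (s := (q:ℂ)) (t := ((p+1:ℝ):ℂ))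
    (by simpa using hq) (by simpa using by linarith : 0 < ((p+1:ℝ):ℂ).re)
  have hbeta : Complex.betaIntegral (q:ℂ) ((p+1:ℝ):ℂ)
      = ((∫ s in (0:ℝ)..1, s ^ (q - 1) * (1 - s) ^ p : ℝ) : ℂ) := by
    rw [Complex.betaIntegral, ← intervalIntegral.integral_ofReal]
    refine intervalIntegral.integral_congr fun s hs => ?_
    rw [uIcc_of_le (by norm_num : (0:ℝ) ≤ 1)] at hs
    obtain ⟨h0, h1⟩ := hs
    rw [Complex.ofReal_mul, Complex.ofReal_cpow h0, Complex.ofReal_cpow (by linarith : (0:ℝ) ≤ 1 - s)]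
    push_cast
    norm_num
  rw [hbeta] at h
  have hQ : ((q:ℂ) + ((p+1:ℝ):ℂ)) = (((q + p + 1 : ℝ)):ℂ) := by push_cast; ring
  rw [hQ, Complex.Gamma_ofReal, Complex.Gamma_ofReal, Complex.Gamma_ofReal] at h
  have h' : Real.Gamma q * Real.Gamma (p+1) = Real.Gamma (q+p+1) * ∫ s in (0:ℝ)..1, s ^ (q - 1) * (1 - s) ^ p := by
    exact_mod_cast h
  have hpos : 0 < Real.Gamma (q + p + 1) := Real.Gamma_pos_of_pos (by linarith)
  have : p + q + 1 = q + p + 1 := by ring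
  rw [this]
  field_simp at h' ⊢
  linarith [h']

open Set in
lemma scaled_beta {p q x : ℝ} (hp : 0 < p) (hq : 0 < q) (hx : 0 < x) :
    ∫ t in (0:ℝ)..x, (x - t) ^ p * t ^ (q-1)
      = x ^ (p + q) * (Real.Gamma (p+1) * Real.Gamma q / Real.Gamma (p + q + 1)) := by
  have h1 : x • ∫ s in (0:ℝ)..1, (x - x*s) ^ p * (x*s) ^ (q-1)
      = ∫ t in (0:ℝ)..x, (x - t) ^ p * t ^ (q-1) := by
    simpa using intervalIntegral.smul_integral_comp_mul_left
      (a := (0:ℝ)) (b := 1) (fun t => (x - t)^p * t^(q-1)) x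
  rw [← h1]
  have h2 : ∫ s in (0:ℝ)..1, (x - x*s) ^ p * (x*s) ^ (q-1)
      = x ^ (p + q - 1) * ∫ s in (0:ℝ)..1, s^(q-1) * (1-s)^p := by
    rw [← intervalIntegral.integral_const_mul]
    refine intervalIntegral.integral_congr fun s hs => ?_
    rw [uIcc_of_le (by norm_num : (0:ℝ) ≤ 1)] at hs
    obtain ⟨h0, h1'⟩ := hs
    have hxs : x - x * s = x * (1 - s) := by ring
    rw [hxs, Real.mul_rpow hx.le (by linarith), Real.mul_rpow hx.le h0]
    have key : x ^ (p+q-1) = x^p * x^(q-1) := by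
      rw [← Real.rpow_add hx]; ring_nf
    rw [key]; ring
  rw [h2, real_beta hp hq, smul_eq_mul]
  have key2 : x * x ^ (p+q-1) = x ^ (p+q) := by
    nth_rewrite 1 [← Real.rpow_one x]
    rw [← Real.rpow_add hx]; ring_nf
  rw [← mul_assoc, key2]; ring

open Set in
lemma lintegral_beta {p q : ℝ} (hp : 0 < p) (hq : 0 < q) (x : ℝ) :
    ∫⁻ t in Ioi (0:ℝ), ENNReal.ofReal ((max (x - t) 0) ^ p * t ^ (q-1))
      = ENNReal.ofReal ((max x 0) ^ (p + q)
          * (Real.Gamma (p+1) * Real.Gamma q / Real.Gamma (p + q + 1))) := by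
  rcases le_or_gt x 0 with hx | hx
  · have h0 : ∀ t ∈ Ioi (0:ℝ), ENNReal.ofReal ((max (x - t) 0) ^ p * t ^ (q-1)) = 0 := by
      intro t ht
      rw [max_eq_right (by linarith [mem_Ioi.mp ht] : x - t ≤ 0), Real.zero_rpow hp.ne',
        zero_mul, ENNReal.ofReal_zero]
    rw [setLIntegral_congr_fun measurableSet_Ioi h0, lintegral_zero,
      max_eq_right hx, Real.zero_rpow (by positivity : p + q ≠ 0), zero_mul, ENNReal.ofReal_zero]
  · have hind : ∀ t ∈ Ioi (0:ℝ), ENNReal.ofReal ((max (x - t) 0) ^ p * t ^ (q-1))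
        = (Ioo (0:ℝ) x).indicator (fun t => ENNReal.ofReal ((x - t) ^ p * t ^ (q-1))) t := by
      intro t ht
      by_cases h : t < x
      · rw [indicator_of_mem (mem_Ioo.mpr ⟨mem_Ioi.mp ht, h⟩), max_eq_left (by linarith)]
      · rw [indicator_of_notMem (fun hmem => h hmem.2),
          max_eq_right (by push_neg at h; linarith), Real.zero_rpow hp.ne', zero_mul,
          ENNReal.ofReal_zero]
    rw [setLIntegral_congr_fun measurableSet_Ioi hind,
      lintegral_indicator measurableSet_Ioo, Measure.restrict_restrict measurableSet_Ioo,
      inter_eq_left.mpr (fun t htm => htm.1)]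
    have hint : IntegrableOn (fun t => (x - t) ^ p * t ^ (q-1)) (Ioo 0 x) := by
      have hg : IntegrableOn (fun t : ℝ => t ^ (q-1)) (Ioo 0 x) :=
        ((intervalIntegrable_iff_integrableOn_Ioc_of_le hx.le).mp
          (intervalIntegral.intervalIntegrable_rpow' (by linarith))).mono_set Ioo_subset_Ioc_self
      refine Integrable.bdd_mul (c := x ^ p) hg ?_ ?_
      · exact (Measurable.aestronglyMeasurable (by fun_prop))
      · rw [ae_restrict_iff' measurableSet_Ioo]
        refine ae_of_all _ fun t ht => ?_
        rw [Real.norm_eq_abs, abs_of_nonneg (Real.rpow_nonneg (by linarith [ht.2]) _)]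
        exact Real.rpow_le_rpow (by linarith [ht.2]) (by linarith [ht.1]) hp.le
    rw [← ofReal_integral_eq_lintegral_ofReal hint]
    · rw [← integral_Ioc_eq_integral_Ioo, ← intervalIntegral.integral_of_le hx.le,
        scaled_beta hp hq hx, max_eq_left hx.le]
    · refine (ae_restrict_iff' measurableSet_Ioo).mpr (ae_of_all _ fun t ht => ?_)
      have := Real.rpow_nonneg (by linarith [ht.2] : (0:ℝ) ≤ x - t) p
      have := Real.rpow_nonneg (le_of_lt ht.1) (q-1)
      positivity

open Set in
lemma conv_cdf {E : Type*} [MeasurableSpace E] {P : Measure E} [IsProbabilityMeasure P]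
    {X Y : E → ℝ} (hX : Measurable X) (hY : Measurable Y)
    (hInd : IndepFun X Y P)
    {a p b q : ℝ} (hp : 0 < p) (hq : 0 < q) (ha : 0 ≤ a) (hb : 0 ≤ b)
    (hXb : ∀ x : ℝ, P {ω | X ω ≤ x} ≤ ENNReal.ofReal (a / Real.Gamma (p+1) * (max x 0) ^ p))
    (hYb : ∀ x : ℝ, P {ω | Y ω ≤ x} ≤ ENNReal.ofReal (b / Real.Gamma (q+1) * (max x 0) ^ q)) :
    ∀ x : ℝ, P {ω | X ω + Y ω ≤ x} ≤
      ENNReal.ofReal (a * b / Real.Gamma (p+q+1) * (max x 0) ^ (p+q)) := by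
  have hΓp : 0 < Real.Gamma (p+1) := Real.Gamma_pos_of_pos (by linarith)
  have hΓq : 0 < Real.Gamma (q+1) := Real.Gamma_pos_of_pos (by linarith)
  have hΓq' : 0 < Real.Gamma q := Real.Gamma_pos_of_pos hq
  have hΓpq : 0 < Real.Gamma (p+q+1) := Real.Gamma_pos_of_pos (by linarith)
  intro x
  have hs : MeasurableSet {pr : ℝ × ℝ | pr.1 + pr.2 ≤ x} :=
    measurableSet_le (by fun_prop) measurable_const
  have hmap : P {ω | X ω + Y ω ≤ x}
      = ((P.map X).prod (P.map Y)) {pr : ℝ × ℝ | pr.1 + pr.2 ≤ x} := by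
    rw [← (indepFun_iff_map_prod_eq_prod_map_map hX.aemeasurable hY.aemeasurable).mp hInd,
      Measure.map_apply (hX.prodMk hY) hs]
    rfl
  rw [hmap, Measure.prod_apply hs]
  have hsec : ∀ u : ℝ, (Prod.mk u ⁻¹' {pr : ℝ × ℝ | pr.1 + pr.2 ≤ x}) = Iic (x - u) := by
    intro u; ext v; simp [le_sub_iff_add_le']
  have hYb' : ∀ u : ℝ, (P.map Y) (Iic (x - u)) ≤
      ENNReal.ofReal (b / Real.Gamma (q+1)) * ENNReal.ofReal ((max (x - u) 0) ^ q) := by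
    intro u
    rw [Measure.map_apply hY measurableSet_Iic, ← ENNReal.ofReal_mul (by positivity)]
    exact hYb (x - u)
  have hmeas1 : Measurable fun u : ℝ => ENNReal.ofReal ((max (x - u) 0) ^ q) :=
    (by fun_prop : Measurable fun u : ℝ => (max (x - u) 0) ^ q).ennreal_ofReal
  have step1 : ∫⁻ u, (P.map Y) (Prod.mk u ⁻¹' {pr : ℝ × ℝ | pr.1 + pr.2 ≤ x}) ∂(P.map X)
      ≤ ENNReal.ofReal (b / Real.Gamma (q+1))
        * ∫⁻ u, ENNReal.ofReal ((max (x - u) 0) ^ q) ∂(P.map X) := by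
    rw [← lintegral_const_mul _ hmeas1]
    refine lintegral_mono fun u => ?_
    rw [hsec u]; exact hYb' u
  refine le_trans step1 ?_
  -- layer cake for I := ∫⁻ u, ofReal((max (x-u) 0)^q) dμ, μ = P.map X
  have hw : ∀ w : ℝ, 0 ≤ w → ∫ t in (0:ℝ)..w, q * t^(q-1) = w ^ q := by
    intro w hw0
    rw [intervalIntegral.integral_const_mul, integral_rpow (Or.inl (by linarith))]
    have hq1 : q - 1 + 1 = q := by ring
    rw [hq1, Real.zero_rpow hq.ne']
    field_simp
    simp
  have hlc := lintegral_comp_eq_lintegral_meas_lt_mul (P.map X)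
      (f := fun u => max (x - u) 0) (g := fun t => q * t^(q-1))
      (ae_of_all _ fun u => le_max_right _ _)
      (by fun_prop : Measurable fun u : ℝ => max (x - u) 0).aemeasurable
      (fun t _ => (intervalIntegral.intervalIntegrable_rpow' (by linarith)).const_mul q)
      ((ae_restrict_iff' measurableSet_Ioi).mpr (ae_of_all _ fun t ht =>
        mul_nonneg hq.le (Real.rpow_nonneg (le_of_lt ht) _)))
  have hIeq : ∫⁻ u, ENNReal.ofReal ((max (x - u) 0) ^ q) ∂(P.map X)
      = ∫⁻ t in Ioi 0, (P.map X) {u | t < max (x - u) 0} * ENNReal.ofReal (q * t^(q-1)) := by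
    rw [← hlc]
    refine lintegral_congr fun u => ?_
    rw [hw _ (le_max_right _ _)]
  rw [hIeq]
  have hset : ∀ t : ℝ, 0 < t → {u : ℝ | t < max (x - u) 0} = Iio (x - t) := by
    intro t ht; ext u
    simp only [mem_setOf_eq, mem_Iio, lt_max_iff]
    constructor
    · rintro (h | h) <;> linarith
    · intro h; left; linarith
  have hbound : ∫⁻ t in Ioi 0, (P.map X) {u | t < max (x - u) 0} * ENNReal.ofReal (q * t^(q-1))
      ≤ ∫⁻ t in Ioi 0, ENNReal.ofReal (a * q / Real.Gamma (p+1))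
          * ENNReal.ofReal ((max (x - t) 0) ^ p * t^(q-1)) := by
    refine setLIntegral_mono' measurableSet_Ioi fun t ht => ?_
    have ht' := mem_Ioi.mp ht
    have h1 : (P.map X) {u | t < max (x - u) 0} ≤
        ENNReal.ofReal (a / Real.Gamma (p+1) * (max (x - t) 0) ^ p) := by
      rw [hset t ht']
      refine le_trans (measure_mono Iio_subset_Iic_self) ?_
      rw [Measure.map_apply hX measurableSet_Iic]
      exact hXb (x - t)
    refine le_trans (mul_le_mul_left h1 _) ?_
    rw [← ENNReal.ofReal_mul (by positivity), ← ENNReal.ofReal_mul (by positivity)]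
    exact ENNReal.ofReal_le_ofReal (le_of_eq (by ring))
  refine le_trans (mul_le_mul_right hbound _) ?_
  rw [lintegral_const_mul _ ((by fun_prop : Measurable fun t : ℝ =>
      (max (x - t) 0) ^ p * t^(q-1)).ennreal_ofReal), lintegral_beta hp hq x,
    ← ENNReal.ofReal_mul (by positivity), ← ENNReal.ofReal_mul (by positivity)]
  refine ENNReal.ofReal_le_ofReal (le_of_eq ?_)
  have hΓrec : Real.Gamma (q+1) = q * Real.Gamma q := Real.Gamma_add_one hq.ne'
  rw [hΓrec]
  field_simp

open Set in
lemma nakagamiPDF_measurable (m Ω : ℝ) : Measurable (nakagamiPDF m Ω) := by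
  unfold nakagamiPDF
  exact Measurable.ite (measurableSet_lt measurable_const measurable_id) (by fun_prop)
    measurable_const

open Set in
lemma nak_cdf {m Ω : ℝ} (hm : 0 < m) (hΩ : 0 < Ω) (x : ℝ) :
    (volume.withDensity fun u => ENNReal.ofReal (nakagamiPDF m Ω u)) (Iic x)
      ≤ ENNReal.ofReal (Ω ^ m / Real.Gamma (m+1) * (max x 0) ^ (2*m)) := by
  have hΓ : 0 < Real.Gamma m := Real.Gamma_pos_of_pos hm
  rw [withDensity_apply _ measurableSet_Iic]
  rcases le_or_gt x 0 with hx | hx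
  · have h0 : ∀ u ∈ Iic x, ENNReal.ofReal (nakagamiPDF m Ω u) = 0 := by
      intro u hu
      rw [nakagamiPDF, if_neg (by simp only [not_lt]; linarith [mem_Iic.mp hu])]
      simp
    rw [setLIntegral_congr_fun measurableSet_Iic h0, lintegral_zero]
    exact bot_le
  · have hmono : ∀ u ∈ Iic x, ENNReal.ofReal (nakagamiPDF m Ω u)
        ≤ (Ioi (0:ℝ)).indicator
            (fun u => ENNReal.ofReal (2 * Ω ^ m / Real.Gamma m * u ^ (2*m-1))) u := by
      intro u _
      by_cases h : 0 < u
      · rw [indicator_of_mem (mem_Ioi.mpr h), nakagamiPDF, if_pos h]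
        apply ENNReal.ofReal_le_ofReal
        have h1 : Real.exp (-Ω * u^2) ≤ 1 := by
          rw [Real.exp_le_one_iff]; nlinarith
        have h2 : (0:ℝ) ≤ 2 * Ω ^ m / Real.Gamma m * u ^ (2*m-1) := by
          have := Real.rpow_nonneg h.le (2*m-1)
          have := Real.rpow_nonneg hΩ.le m
          positivity
        nlinarith
      · rw [nakagamiPDF, if_neg h, indicator]; simp
    have hint : IntegrableOn (fun u : ℝ => 2 * Ω ^ m / Real.Gamma m * u ^ (2*m-1)) (Ioc 0 x) := by
      refine (intervalIntegrable_iff_integrableOn_Ioc_of_le hx.le).mp ?_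
      exact (intervalIntegral.intervalIntegrable_rpow' (by linarith)).const_mul _
    calc ∫⁻ u in Iic x, ENNReal.ofReal (nakagamiPDF m Ω u)
        ≤ ∫⁻ u in Iic x, (Ioi (0:ℝ)).indicator
            (fun u => ENNReal.ofReal (2 * Ω ^ m / Real.Gamma m * u ^ (2*m-1))) u :=
          setLIntegral_mono' measurableSet_Iic hmono
      _ = ∫⁻ u in Ioc 0 x, ENNReal.ofReal (2 * Ω ^ m / Real.Gamma m * u ^ (2*m-1)) := by
          rw [lintegral_indicator measurableSet_Ioi, Measure.restrict_restrict measurableSet_Ioi,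
            Ioi_inter_Iic]
      _ = ENNReal.ofReal (∫ u in Ioc 0 x, 2 * Ω ^ m / Real.Gamma m * u ^ (2*m-1)) := by
          rw [← ofReal_integral_eq_lintegral_ofReal hint]
          refine (ae_restrict_iff' measurableSet_Ioc).mpr (ae_of_all _ fun u hu => ?_)
          have := Real.rpow_nonneg hu.1.le (2*m-1)
          have := Real.rpow_nonneg hΩ.le m
          positivity
      _ ≤ ENNReal.ofReal (Ω ^ m / Real.Gamma (m+1) * (max x 0) ^ (2*m)) := by
          apply ENNReal.ofReal_le_ofReal
          apply le_of_eq
          rw [integral_const_mul _ _, ← intervalIntegral.integral_of_le hx.le,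
            integral_rpow (Or.inl (by linarith))]
          have h2m : 2*m-1+1 = 2*m := by ring
          rw [h2m, Real.zero_rpow (by positivity), Real.Gamma_add_one hm.ne',
            max_eq_left hx.le]
          field_simp
          ring

open Set in
lemma nak_prod_cdf {E : Type*} [MeasurableSpace E] {P : Measure E} [IsProbabilityMeasure P]
    {X Y : E → ℝ} (hX : Measurable X) (hY : Measurable Y) (hInd : IndepFun X Y P)
    {m₁ m₂ Ω₁ Ω₂ : ℝ} (hm₂ : 0 < m₂) (hm₁₂ : m₂ < m₁) (hΩ₁ : 0 < Ω₁) (hΩ₂ : 0 < Ω₂)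
    (h1 : IsNakagami P X m₁ Ω₁) (h2 : IsNakagami P Y m₂ Ω₂) (x : ℝ) :
    P {ω | X ω * Y ω ≤ x} ≤ ENNReal.ofReal
      (Real.Gamma (m₁-m₂) / Real.Gamma m₁ * Ω₁ ^ m₂ * (Ω₂ ^ m₂ / Real.Gamma (m₂+1))
        * (max x 0) ^ (2*m₂)) := by
  have hm₁ : 0 < m₁ := lt_trans hm₂ hm₁₂
  have hΓ₁ : 0 < Real.Gamma m₁ := Real.Gamma_pos_of_pos hm₁
  have hΓ₂ : 0 < Real.Gamma (m₂+1) := Real.Gamma_pos_of_pos (by linarith)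
  have hΓ₁₂ : 0 < Real.Gamma (m₁-m₂) := Real.Gamma_pos_of_pos (by linarith)
  have hM : (0:ℝ) ≤ (max x 0) ^ (2*m₂) := Real.rpow_nonneg (le_max_right _ _) _
  set M := (max x 0) ^ (2*m₂) with hMdef
  set K₂ := Ω₂ ^ m₂ / Real.Gamma (m₂+1) with hK₂
  have hK₂0 : 0 ≤ K₂ := by positivity
  have hs : MeasurableSet {pr : ℝ × ℝ | pr.1 * pr.2 ≤ x} :=
    measurableSet_le (by fun_prop) measurable_const
  have hmap : P {ω | X ω * Y ω ≤ x}
      = ((P.map X).prod (P.map Y)) {pr : ℝ × ℝ | pr.1 * pr.2 ≤ x} := by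
    rw [← (indepFun_iff_map_prod_eq_prod_map_map hX.aemeasurable hY.aemeasurable).mp hInd,
      Measure.map_apply (hX.prodMk hY) hs]
    rfl
  rw [hmap, Measure.prod_apply hs, h1]
  have hgm : Measurable fun u : ℝ => (P.map Y) (Prod.mk u ⁻¹' {pr : ℝ × ℝ | pr.1 * pr.2 ≤ x}) :=
    measurable_measure_prodMk_left hs
  rw [lintegral_withDensity_eq_lintegral_mul _ ((nakagamiPDF_measurable m₁ Ω₁).ennreal_ofReal) hgm]
  -- pointwise bound
  have hptw : ∀ u : ℝ,
      ((fun u => ENNReal.ofReal (nakagamiPDF m₁ Ω₁ u)) * fun u =>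
        (P.map Y) (Prod.mk u ⁻¹' {pr : ℝ × ℝ | pr.1 * pr.2 ≤ x})) u
      ≤ (Ioi (0:ℝ)).indicator
          (fun u => ENNReal.ofReal (nakagamiPDF m₁ Ω₁ u * (K₂ * M * u ^ (-(2*m₂))))) u := by
    intro u
    simp only [Pi.mul_apply]
    by_cases hu : 0 < u
    · rw [indicator_of_mem (mem_Ioi.mpr hu)]
      have hsec : (Prod.mk u ⁻¹' {pr : ℝ × ℝ | pr.1 * pr.2 ≤ x}) = Iic (x / u) := by
        ext v; simp only [mem_preimage, mem_setOf_eq, mem_Iic]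
        rw [le_div_iff₀ hu]; constructor <;> intro h <;> nlinarith
      have hb : (P.map Y) (Prod.mk u ⁻¹' {pr : ℝ × ℝ | pr.1 * pr.2 ≤ x})
          ≤ ENNReal.ofReal (K₂ * M * u ^ (-(2*m₂))) := by
        rw [hsec, h2]
        refine le_trans (nak_cdf (by linarith) hΩ₂ (x/u)) ?_
        apply ENNReal.ofReal_le_ofReal
        apply le_of_eq
        have hmd : max (x/u) 0 = (max x 0) / u := by
          rw [← max_div_div_right hu.le x 0, zero_div]
        rw [hmd, Real.div_rpow (le_max_right _ _) hu.le, Real.rpow_neg hu.le, hK₂, hMdef]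
        field_simp
      have hpdf0 : (0:ℝ) ≤ nakagamiPDF m₁ Ω₁ u := by
        rw [nakagamiPDF, if_pos hu]
        have := Real.rpow_nonneg hu.le (2*m₁-1)
        have := Real.rpow_nonneg hΩ₁.le m₁
        positivity
      calc ENNReal.ofReal (nakagamiPDF m₁ Ω₁ u) * (P.map Y) (Prod.mk u ⁻¹' _)
          ≤ ENNReal.ofReal (nakagamiPDF m₁ Ω₁ u) * ENNReal.ofReal (K₂ * M * u ^ (-(2*m₂))) :=
            mul_le_mul_right hb _
        _ = ENNReal.ofReal (nakagamiPDF m₁ Ω₁ u * (K₂ * M * u ^ (-(2*m₂)))) :=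
            (ENNReal.ofReal_mul hpdf0).symm
    · rw [nakagamiPDF, if_neg hu]
      simp
  refine le_trans (lintegral_mono hptw) ?_
  rw [lintegral_indicator measurableSet_Ioi]
  -- rewrite integrand on Ioi 0
  have hcongr : ∀ u ∈ Ioi (0:ℝ),
      ENNReal.ofReal (nakagamiPDF m₁ Ω₁ u * (K₂ * M * u ^ (-(2*m₂))))
      = ENNReal.ofReal (2 * Ω₁ ^ m₁ / Real.Gamma m₁ * (K₂ * M))
        * ENNReal.ofReal (u ^ (2*m₁-2*m₂-1) * Real.exp (-Ω₁ * u^2)) := by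
    intro u hu
    have hu' := mem_Ioi.mp hu
    rw [← ENNReal.ofReal_mul (by positivity)]
    congr 1
    rw [nakagamiPDF, if_pos hu']
    have hcomb : u ^ (2*m₁-1) * u ^ (-(2*m₂)) = u ^ (2*m₁-2*m₂-1) := by
      rw [← Real.rpow_add hu']; ring_nf
    calc 2 * Ω₁ ^ m₁ / Real.Gamma m₁ * u ^ (2*m₁-1) * Real.exp (-Ω₁*u^2) * (K₂ * M * u ^ (-(2*m₂)))
        = 2 * Ω₁ ^ m₁ / Real.Gamma m₁ * (K₂ * M)
            * ((u ^ (2*m₁-1) * u ^ (-(2*m₂))) * Real.exp (-Ω₁*u^2)) := by ring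
      _ = _ := by rw [hcomb]
  rw [setLIntegral_congr_fun measurableSet_Ioi hcongr,
    lintegral_const_mul _ ((by fun_prop : Measurable fun u : ℝ =>
      u ^ (2*m₁-2*m₂-1) * Real.exp (-Ω₁ * u^2)).ennreal_ofReal)]
  have hintOn : IntegrableOn (fun u : ℝ => u ^ (2*m₁-2*m₂-1) * Real.exp (-Ω₁ * u^2)) (Ioi 0) :=
    integrableOn_rpow_mul_exp_neg_mul_sq hΩ₁ (by linarith)
  rw [← ofReal_integral_eq_lintegral_ofReal hintOn
    ((ae_restrict_iff' measurableSet_Ioi).mpr (ae_of_all _ fun u hu => by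
      have := Real.rpow_nonneg (le_of_lt (mem_Ioi.mp hu)) (2*m₁-2*m₂-1)
      positivity))]
  have hval : ∫ u in Ioi (0:ℝ), u ^ (2*m₁-2*m₂-1) * Real.exp (-Ω₁ * u^2)
      = Ω₁ ^ (m₂ - m₁) * (1/2) * Real.Gamma (m₁ - m₂) := by
    have := integral_rpow_mul_exp_neg_mul_rpow (p := 2) (q := 2*m₁-2*m₂-1) (b := Ω₁)
      (by norm_num) (by linarith) hΩ₁
    rw [show ∫ u in Ioi (0:ℝ), u ^ (2*m₁-2*m₂-1) * Real.exp (-Ω₁ * u^2)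
        = ∫ u in Ioi (0:ℝ), u ^ (2*m₁-2*m₂-1) * Real.exp (-Ω₁ * u^(2:ℝ)) from
      setIntegral_congr_fun measurableSet_Ioi fun u hu => by rw [Real.rpow_two],
      this, show -(2*m₁-2*m₂-1+1)/2 = m₂ - m₁ by ring, show (2*m₁-2*m₂-1+1)/2 = m₁ - m₂ by ring]
  rw [hval, ← ENNReal.ofReal_mul (by positivity)]
  apply ENNReal.ofReal_le_ofReal
  apply le_of_eq
  have hΩcomb : Ω₁ ^ m₁ * Ω₁ ^ (m₂ - m₁) = Ω₁ ^ m₂ := by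
    rw [← Real.rpow_add hΩ₁]; ring_nf
  field_simp
  linear_combination (K₂ * M) * hΩcomb

open Set in
/-- Equation (28) of the paper: upper bound on the outage probability of an IRS-assisted
system with a direct link, where `H = ∑_n X_{1,n} X_{2,n}`,
`C = 2 (Γ(2m₂)/Γ(m₂)) (Γ(m₁-m₂)/Γ(m₁)) (Ω₁Ω₂)^{m₂}` and `t = m₀ + N m₂`: for `ρ, γ_th > 0`,
`P(ρ (X₀ + H)² ≤ γ_th) ≤ 2 (Γ(2m₀)/Γ(m₀)) Ω₀^{m₀} C^N (γ_th/ρ)^t / Γ(2t + 1)`. -/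
theorem irs_direct_link_outage_upper_bound
    {E : Type*} [MeasurableSpace E] (P : Measure E) [IsProbabilityMeasure P]
    (m₁ m₂ Ω₁ Ω₂ m₀ Ω₀ : ℝ) (hm₂ : 0 < m₂) (hm₁₂ : m₂ < m₁) (hΩ₁ : 0 < Ω₁) (hΩ₂ : 0 < Ω₂)
    (hm₀ : 0 < m₀) (hΩ₀ : 0 < Ω₀)
    (N : ℕ) (hN : 0 < N)
    (X₀ : E → ℝ) (X₁ X₂ : Fin N → E → ℝ)
    (hX₀ : Measurable X₀)
    (hX₁ : ∀ n, Measurable (X₁ n)) (hX₂ : ∀ n, Measurable (X₂ n))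
    (hNak₀ : IsNakagami P X₀ m₀ Ω₀)
    (hNak₁ : ∀ n, IsNakagami P (X₁ n) m₁ Ω₁) (hNak₂ : ∀ n, IsNakagami P (X₂ n) m₂ Ω₂)
    (hIndep : iIndepFun
      (fun o : Option (Fin N ⊕ Fin N) => o.elim X₀ (Sum.elim X₁ X₂)) P)
    (C : ℝ) (hC : C = 2 * (Real.Gamma (2 * m₂) / Real.Gamma m₂) *
      (Real.Gamma (m₁ - m₂) / Real.Gamma m₁) * (Ω₁ * Ω₂) ^ m₂)
    (t : ℝ) (ht : t = m₀ + N * m₂)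
    (ρ γth : ℝ) (hρ : 0 < ρ) (hγth : 0 < γth) :
    (P {ω | ρ * (X₀ ω + ∑ n, X₁ n ω * X₂ n ω) ^ 2 ≤ γth}).toReal ≤
      2 * (Real.Gamma (2 * m₀) / Real.Gamma m₀) * Ω₀ ^ m₀ * C ^ N *
        (γth / ρ) ^ t / Real.Gamma (2 * t + 1) := by
  have hm₁ : 0 < m₁ := lt_trans hm₂ hm₁₂
  have hΓm₀ : 0 < Real.Gamma m₀ := Real.Gamma_pos_of_pos hm₀
  have hΓ2m₀ : 0 < Real.Gamma (2*m₀) := Real.Gamma_pos_of_pos (by linarith)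
  have hΓm₂ : 0 < Real.Gamma m₂ := Real.Gamma_pos_of_pos hm₂
  have hΓ2m₂ : 0 < Real.Gamma (2*m₂) := Real.Gamma_pos_of_pos (by linarith)
  have hΓm₁ : 0 < Real.Gamma m₁ := Real.Gamma_pos_of_pos hm₁
  have hΓ12 : 0 < Real.Gamma (m₁ - m₂) := Real.Gamma_pos_of_pos (by linarith)
  set a₀ : ℝ := 2 * (Real.Gamma (2 * m₀) / Real.Gamma m₀) * Ω₀ ^ m₀ with ha₀def
  have hΩ₀m : (0:ℝ) < Ω₀ ^ m₀ := Real.rpow_pos_of_pos hΩ₀ _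
  have ha₀ : 0 ≤ a₀ := by rw [ha₀def]; positivity
  have hC0 : 0 ≤ C := by
    rw [hC]
    have : (0:ℝ) < (Ω₁ * Ω₂) ^ m₂ := Real.rpow_pos_of_pos (by positivity) _
    positivity
  set f : Option (Fin N ⊕ Fin N) → E → ℝ :=
    fun o => o.elim X₀ (Sum.elim X₁ X₂) with hfdef
  have hfm : ∀ i, Measurable (f i) := by
    rintro (_ | n | n)
    exacts [hX₀, hX₁ n, hX₂ n]
  -- normalized CDF bound for X₀
  have hX₀b : ∀ x : ℝ, P {ω | X₀ ω ≤ x} ≤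
      ENNReal.ofReal (a₀ / Real.Gamma (2*m₀+1) * (max x 0) ^ (2*m₀)) := by
    intro x
    have h1 : P {ω | X₀ ω ≤ x} = (P.map X₀) (Iic x) := by
      rw [Measure.map_apply hX₀ measurableSet_Iic]; rfl
    rw [h1, hNak₀]
    refine le_trans (nak_cdf hm₀ hΩ₀ x) (le_of_eq ?_)
    congr 1
    have e1 : Real.Gamma (m₀+1) = m₀ * Real.Gamma m₀ := Real.Gamma_add_one hm₀.ne'
    have e2 : Real.Gamma (2*m₀+1) = (2*m₀) * Real.Gamma (2*m₀) := Real.Gamma_add_one (by positivity)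
    rw [ha₀def, e1, e2]
    field_simp
  -- normalized CDF bound for each product
  have hProdb : ∀ (n : Fin N) (x : ℝ), P {ω | X₁ n ω * X₂ n ω ≤ x} ≤
      ENNReal.ofReal (C / Real.Gamma (2*m₂+1) * (max x 0) ^ (2*m₂)) := by
    intro n x
    have hind : IndepFun (X₁ n) (X₂ n) P := by
      have := hIndep.indepFun (i := some (Sum.inl n)) (j := some (Sum.inr n)) (by simp)
      exact this
    refine le_trans (nak_prod_cdf (hX₁ n) (hX₂ n) hind hm₂ hm₁₂ hΩ₁ hΩ₂
      (hNak₁ n) (hNak₂ n) x) (le_of_eq ?_)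
    congr 1
    have e1 : Real.Gamma (m₂+1) = m₂ * Real.Gamma m₂ := Real.Gamma_add_one hm₂.ne'
    have e2 : Real.Gamma (2*m₂+1) = (2*m₂) * Real.Gamma (2*m₂) := Real.Gamma_add_one (by positivity)
    have e3 : (Ω₁ * Ω₂) ^ m₂ = Ω₁ ^ m₂ * Ω₂ ^ m₂ := Real.mul_rpow hΩ₁.le hΩ₂.le
    rw [hC, e1, e2, e3]
    field_simp
  -- induction on partial sums
  have key : ∀ k : ℕ, k ≤ N → ∀ x : ℝ,
      P {ω | X₀ ω + ∑ n ∈ Finset.filter (fun n : Fin N => (n:ℕ) < k) Finset.univ,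
          X₁ n ω * X₂ n ω ≤ x}
        ≤ ENNReal.ofReal (a₀ * C ^ k / Real.Gamma (2*m₀ + 2*(k:ℝ)*m₂ + 1)
            * (max x 0) ^ (2*m₀ + 2*(k:ℝ)*m₂)) := by
    intro k
    induction k with
    | zero =>
      intro _ x
      have hset : {ω | X₀ ω + ∑ n ∈ Finset.filter (fun n : Fin N => (n:ℕ) < 0) Finset.univ,
          X₁ n ω * X₂ n ω ≤ x} = {ω | X₀ ω ≤ x} := by
        ext ω; simp
      rw [hset]
      have hcn : a₀ * C ^ 0 / Real.Gamma (2*m₀ + 2*((0:ℕ):ℝ)*m₂ + 1)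
            * (max x 0) ^ (2*m₀ + 2*((0:ℕ):ℝ)*m₂)
          = a₀ / Real.Gamma (2*m₀+1) * (max x 0) ^ (2*m₀) := by
        norm_num
      rw [hcn]
      exact hX₀b x
    | succ k ih =>
      intro hk1 x
      have hkN : k < N := by omega
      set kF : Fin N := ⟨k, hkN⟩ with hkFdef
      have hfilter : Finset.filter (fun n : Fin N => (n:ℕ) < k+1) Finset.univ
          = insert kF (Finset.filter (fun n : Fin N => (n:ℕ) < k) Finset.univ) := by
        ext n
        simp only [Finset.mem_filter, Finset.mem_univ, true_and, Finset.mem_insert, Fin.ext_iff,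
          hkFdef]
        omega
      have hnot : kF ∉ Finset.filter (fun n : Fin N => (n:ℕ) < k) Finset.univ := by
        simp [hkFdef]
      -- independence of partial sum and next product
      have hnoneS : ∀ (S : Finset (Option (Fin N ⊕ Fin N))), none ∈ insert none S :=
        fun S => Finset.mem_insert_self _ _
      set Fk : Finset (Fin N) := Finset.filter (fun n : Fin N => (n:ℕ) < k) Finset.univ with hFkdef
      set S : Finset (Option (Fin N ⊕ Fin N)) :=
        insert none ((Fk.image fun n => some (Sum.inl n)) ∪ (Fk.image fun n => some (Sum.inr n)))
        with hSdef
      set T : Finset (Option (Fin N ⊕ Fin N)) := {some (Sum.inl kF), some (Sum.inr kF)} with hTdef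
      have hmemFk : ∀ n : Fin N, (n:ℕ) < k → n ∈ Fk := fun n h =>
        Finset.mem_filter.mpr ⟨Finset.mem_univ n, h⟩
      have hinlS : ∀ n : Fin N, (n:ℕ) < k → some (Sum.inl n) ∈ S := fun n h =>
        Finset.mem_insert_of_mem (Finset.mem_union_left _
          (Finset.mem_image_of_mem _ (hmemFk n h)))
      have hinrS : ∀ n : Fin N, (n:ℕ) < k → some (Sum.inr n) ∈ S := fun n h =>
        Finset.mem_insert_of_mem (Finset.mem_union_right _
          (Finset.mem_image_of_mem _ (hmemFk n h)))
      have hinlT : some (Sum.inl kF) ∈ T := Finset.mem_insert_self _ _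
      have hinrT : some (Sum.inr kF) ∈ T := by
        rw [hTdef]; exact Finset.mem_insert_of_mem (Finset.mem_singleton_self _)
      have hST : Disjoint S T := by
        rw [Finset.disjoint_left]
        intro o hoS hoT
        rw [hTdef] at hoT
        simp only [Finset.mem_insert, Finset.mem_singleton] at hoT
        rw [hSdef] at hoS
        simp only [Finset.mem_insert, Finset.mem_union, Finset.mem_image, hFkdef,
          Finset.mem_filter, Finset.mem_univ, true_and] at hoS
        rcases hoT with rfl | rfl
        · rcases hoS with h | ⟨n, hn, hna⟩ | ⟨n, hn, hna⟩
          · simp at h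
          · obtain rfl : n = kF := by
              have := Option.some.inj hna
              exact Sum.inl.inj this
            simp [hkFdef] at hn
          · simp at hna
        · rcases hoS with h | ⟨n, hn, hna⟩ | ⟨n, hn, hna⟩
          · simp at h
          · simp at hna
          · obtain rfl : n = kF := by
              have := Option.some.inj hna
              exact Sum.inr.inj this
            simp [hkFdef] at hn
      have hIF := hIndep.indepFun_finset S T hST hfm
      set φ : ((i : S) → ℝ) → ℝ := fun v =>
        v ⟨none, hnoneS _⟩ + ∑ n : Fin N, if h : (n:ℕ) < k then
          v ⟨some (Sum.inl n), hinlS n h⟩ * v ⟨some (Sum.inr n), hinrS n h⟩ else 0 with hφdef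
      set ψ : ((i : T) → ℝ) → ℝ := fun w =>
        w ⟨some (Sum.inl kF), hinlT⟩ * w ⟨some (Sum.inr kF), hinrT⟩ with hψdef
      have hφm : Measurable φ := by
        rw [hφdef]
        refine Measurable.add (measurable_pi_apply _) ?_
        refine Finset.measurable_sum _ fun n _ => ?_
        by_cases h : (n:ℕ) < k
        · simp only [dif_pos h]
          exact (measurable_pi_apply _).mul (measurable_pi_apply _)
        · simp only [dif_neg h]
          exact measurable_const
      have hψm : Measurable ψ := (measurable_pi_apply _).mul (measurable_pi_apply _)
      have hIndepStep : IndepFun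
          (fun ω => X₀ ω + ∑ n ∈ Fk, X₁ n ω * X₂ n ω)
          (fun ω => X₁ kF ω * X₂ kF ω) P := by
        have hcomp := hIF.comp hφm hψm
        have hφf : (φ ∘ fun a (i : S) => f i a)
            = fun ω => X₀ ω + ∑ n ∈ Fk, X₁ n ω * X₂ n ω := by
          funext a
          simp only [Function.comp_apply, hφdef]
          congr 1
          rw [hFkdef, Finset.sum_filter]
          refine Finset.sum_congr rfl fun n _ => ?_
          by_cases h : (n:ℕ) < k
          · simp only [dif_pos h, if_pos h]
            rfl
          · simp only [dif_neg h, if_neg h]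
        have hψf : (ψ ∘ fun a (i : T) => f i a) = fun ω => X₁ kF ω * X₂ kF ω := by
          funext a
          simp only [Function.comp_apply, hψdef]
          rfl
        rwa [hφf, hψf] at hcomp
      -- apply convolution bound
      have hSkm : Measurable (fun ω => X₀ ω + ∑ n ∈ Fk, X₁ n ω * X₂ n ω) :=
        hX₀.add (Finset.measurable_sum _ fun n _ => (hX₁ n).mul (hX₂ n))
      have hPm : Measurable (fun ω => X₁ kF ω * X₂ kF ω) := (hX₁ kF).mul (hX₂ kF)
      have hp : (0:ℝ) < 2*m₀ + 2*(k:ℝ)*m₂ := by positivity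
      have hconv := conv_cdf hSkm hPm hIndepStep hp (by positivity : (0:ℝ) < 2*m₂)
        (by positivity : (0:ℝ) ≤ a₀ * C ^ k) hC0 (ih (by omega)) (hProdb kF) x
      have hsetEq : {ω | X₀ ω + ∑ n ∈ Finset.filter (fun n : Fin N => (n:ℕ) < k+1) Finset.univ,
            X₁ n ω * X₂ n ω ≤ x}
          = {ω | (fun ω => X₀ ω + ∑ n ∈ Fk, X₁ n ω * X₂ n ω) ω
              + (fun ω => X₁ kF ω * X₂ kF ω) ω ≤ x} := by
        ext ω
        simp only [mem_setOf_eq, hfilter, Finset.sum_insert hnot]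
        constructor <;> intro h <;> linarith
      rw [hsetEq]
      refine le_trans hconv (le_of_eq ?_)
      congr 1
      have hexp : 2*m₀ + 2*(k:ℝ)*m₂ + 2*m₂ = 2*m₀ + 2*((k+1:ℕ):ℝ)*m₂ := by
        push_cast; ring
      rw [pow_succ, hexp]
      ring_nf
  -- conclude
  have hfilterN : Finset.filter (fun n : Fin N => (n:ℕ) < N) Finset.univ = Finset.univ :=
    Finset.filter_true_of_mem fun n _ => n.isLt
  have hfinal := key N le_rfl
  rw [hfilterN] at hfinal
  set x₀ : ℝ := Real.sqrt (γth / ρ) with hx₀def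
  have hγρ : 0 < γth / ρ := by positivity
  have hx₀ : 0 < x₀ := Real.sqrt_pos.mpr hγρ
  have hsq : x₀ ^ 2 = γth / ρ := Real.sq_sqrt hγρ.le
  have hsub : {ω | ρ * (X₀ ω + ∑ n, X₁ n ω * X₂ n ω) ^ 2 ≤ γth}
      ⊆ {ω | X₀ ω + ∑ n, X₁ n ω * X₂ n ω ≤ x₀} := by
    intro ω h
    simp only [mem_setOf_eq] at h ⊢
    by_contra hgt
    push_neg at hgt
    have h2 : x₀^2 < (X₀ ω + ∑ n, X₁ n ω * X₂ n ω)^2 := by nlinarith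
    rw [hsq] at h2
    have h3 : γth < ρ * (X₀ ω + ∑ n, X₁ n ω * X₂ n ω)^2 := by
      calc γth = ρ * (γth/ρ) := by field_simp
        _ < _ := mul_lt_mul_of_pos_left h2 hρ
    linarith
  have hPb := le_trans (measure_mono hsub) (hfinal x₀)
  have hxpow : (max x₀ 0) ^ (2*m₀ + 2*(N:ℝ)*m₂) = (γth / ρ) ^ t := by
    rw [max_eq_left hx₀.le, hx₀def, Real.sqrt_eq_rpow, ← Real.rpow_mul hγρ.le]
    congr 1
    rw [ht]; ring
  have hΓ2t1 : 0 < Real.Gamma (2*t+1) := Real.Gamma_pos_of_pos (by rw [ht]; positivity)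
  have hΓt : Real.Gamma (2*m₀ + 2*(N:ℝ)*m₂ + 1) = Real.Gamma (2*t+1) := by
    rw [ht]; ring_nf
  rw [hxpow, hΓt] at hPb
  have heq : a₀ * C ^ N / Real.Gamma (2*t+1) * (γth/ρ) ^ t
      = 2 * (Real.Gamma (2 * m₀) / Real.Gamma m₀) * Ω₀ ^ m₀ * C ^ N *
        (γth / ρ) ^ t / Real.Gamma (2 * t + 1) := by
    rw [ha₀def]; ring
  have hRHS : (0:ℝ) ≤ 2 * (Real.Gamma (2 * m₀) / Real.Gamma m₀) * Ω₀ ^ m₀ * C ^ N *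
      (γth / ρ) ^ t / Real.Gamma (2 * t + 1) := by
    rw [← heq]
    exact mul_nonneg (div_nonneg (mul_nonneg ha₀ (pow_nonneg hC0 N)) hΓ2t1.le)
      (Real.rpow_nonneg hγρ.le _)
  refine ENNReal.toReal_le_of_le_ofReal hRHS (le_trans hPb (le_of_eq ?_))
  exact congrArg ENNReal.ofReal heq
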